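/- Let ζ = e^{2πi/72} ∈ ℂ (so q = ζ²⁴ = e^{2πi/3}). Let ε_m = −1 if m ≡ ±1 (mod 12), ε_m = +1 if m ≡ ±5 (mod 12), ε_m = 0 otherwise. For n ≥ 1 set J_n = −(ζ^{−36n²+24}/(ζ^{12n} − ζ^{−12n})) · Σ_{r=0}^{6n} ε_{6n−r} ζ^{r²−1} (the colored Jones polynomial of the right-handed trefoil T(2,3) evaluated with q^{1/24} = ζ) and [n] = (ζ^{12n} − ζ^{−12n})/(ζ^{12} − ζ^{−12}). Then (−i(ζ^{12} − ζ^{−12})/√6) · (Σ_{n=1}^{2} [n]² ζ^{−6(n²−1)} J_n²) / (Σ_{n=1}^{2} [n]² ζ^{−6(n²−1)}) = 1/√2. (This is the SU(2) Chern–Simons partition function Z_CS[S³_{−1}(T(2,3) # T(2,3))] at level k = 3.) -/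

import Mathlib

open scoped Classical in
/-- `ε_m = −1` if `m ≡ ±1 (mod 12)`, `ε_m = +1` if `m ≡ ±5 (mod 12)`, `ε_m = 0` otherwise. -/
noncomputable def trefoilEps (m : ℤ) : ℤ :=
  if (m ≡ 1 [ZMOD 12] ∨ m ≡ -1 [ZMOD 12]) then -1
  else if (m ≡ 5 [ZMOD 12] ∨ m ≡ -5 [ZMOD 12]) then 1
  else 0

/-- `ζ = e^{2πi/72}`, so that `q = ζ²⁴ = e^{2πi/3}` (level `k = 3`). -/
noncomputable def ζ72 : ℂ := Complex.exp (2 * Real.pi * Complex.I / 72)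

/-- The colored Jones polynomial of the right-handed trefoil `T(2,3)` evaluated with
`q^{1/24} = ζ = e^{2πi/72}`:
`J_n = −(ζ^{−36n²+24}/(ζ^{12n} − ζ^{−12n})) Σ_{r=0}^{6n} ε_{6n−r} ζ^{r²−1}`. -/
noncomputable def J72 (n : ℕ) : ℂ :=
  -(ζ72 ^ (-36*(n:ℤ)^2 + 24) / (ζ72 ^ (12*(n:ℤ)) - ζ72 ^ (-(12*(n:ℤ))))) *
    ∑ r ∈ Finset.range (6*n + 1), (trefoilEps (6*(n:ℤ) - (r:ℤ)) : ℂ) * ζ72 ^ ((r:ℤ)^2 - 1)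

/-- The quantum integer `[n] = (ζ^{12n} − ζ^{−12n})/(ζ^{12} − ζ^{−12})`. -/
noncomputable def qint72 (n : ℕ) : ℂ :=
  (ζ72 ^ (12*(n:ℤ)) - ζ72 ^ (-(12*(n:ℤ)))) / (ζ72 ^ (12:ℤ) - ζ72 ^ (-12:ℤ))

lemma eps1 : trefoilEps 1 = -1 := by rw [trefoilEps, if_pos (by decide)]
lemma eps5 : trefoilEps 5 = 1 := by rw [trefoilEps, if_neg (by decide), if_pos (by decide)]
lemma eps7 : trefoilEps 7 = 1 := by rw [trefoilEps, if_neg (by decide), if_pos (by decide)]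
lemma eps11 : trefoilEps 11 = -1 := by rw [trefoilEps, if_pos (by decide)]
lemma eps0 : trefoilEps 0 = 0 := by rw [trefoilEps, if_neg (by decide), if_neg (by decide)]
lemma eps2 : trefoilEps 2 = 0 := by rw [trefoilEps, if_neg (by decide), if_neg (by decide)]
lemma eps3 : trefoilEps 3 = 0 := by rw [trefoilEps, if_neg (by decide), if_neg (by decide)]
lemma eps4 : trefoilEps 4 = 0 := by rw [trefoilEps, if_neg (by decide), if_neg (by decide)]
lemma eps6 : trefoilEps 6 = 0 := by rw [trefoilEps, if_neg (by decide), if_neg (by decide)]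
lemma eps8 : trefoilEps 8 = 0 := by rw [trefoilEps, if_neg (by decide), if_neg (by decide)]
lemma eps9 : trefoilEps 9 = 0 := by rw [trefoilEps, if_neg (by decide), if_neg (by decide)]
lemma eps10 : trefoilEps 10 = 0 := by rw [trefoilEps, if_neg (by decide), if_neg (by decide)]
lemma eps12 : trefoilEps 12 = 0 := by rw [trefoilEps, if_neg (by decide), if_neg (by decide)]

lemma zeta_zpow (k : ℤ) : ζ72 ^ k = Complex.exp (k * (2 * Real.pi * Complex.I / 72)) := by
  rw [ζ72, ← Complex.exp_int_mul]

lemma exp_real_mul_I (x : ℝ) :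
    Complex.exp ((x:ℂ) * Complex.I) = (Real.cos x : ℂ) + (Real.sin x : ℂ) * Complex.I := by
  rw [Complex.exp_mul_I, ← Complex.ofReal_cos, ← Complex.ofReal_sin]

noncomputable abbrev s3 : ℂ := (Real.sqrt 3 : ℂ)

lemma z12 : ζ72 ^ (12:ℤ) = 1/2 + s3/2 * Complex.I := by
  rw [zeta_zpow, show ((12:ℤ):ℂ) * (2 * Real.pi * Complex.I / 72) = ((Real.pi/3 : ℝ):ℂ) * Complex.I by push_cast; ring,
    exp_real_mul_I, Real.cos_pi_div_three, Real.sin_pi_div_three]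
  push_cast; ring

lemma zm12 : ζ72 ^ (-12:ℤ) = 1/2 - s3/2 * Complex.I := by
  rw [zeta_zpow, show ((-12:ℤ):ℂ) * (2 * Real.pi * Complex.I / 72) = ((-(Real.pi/3) : ℝ):ℂ) * Complex.I by push_cast; ring,
    exp_real_mul_I, Real.cos_neg, Real.sin_neg, Real.cos_pi_div_three, Real.sin_pi_div_three]
  push_cast; ring

lemma z24 : ζ72 ^ (24:ℤ) = -(1/2) + s3/2 * Complex.I := by
  rw [zeta_zpow, show ((24:ℤ):ℂ) * (2 * Real.pi * Complex.I / 72) = ((Real.pi - Real.pi/3 : ℝ):ℂ) * Complex.I by push_cast; ring,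
    exp_real_mul_I, Real.cos_pi_sub, Real.sin_pi_sub, Real.cos_pi_div_three, Real.sin_pi_div_three]
  push_cast; ring

lemma zm24 : ζ72 ^ (-24:ℤ) = -(1/2) - s3/2 * Complex.I := by
  rw [zeta_zpow, show ((-24:ℤ):ℂ) * (2 * Real.pi * Complex.I / 72) = ((-(Real.pi - Real.pi/3) : ℝ):ℂ) * Complex.I by push_cast; ring,
    exp_real_mul_I, Real.cos_neg, Real.sin_neg, Real.cos_pi_sub, Real.sin_pi_sub, Real.cos_pi_div_three, Real.sin_pi_div_three]
  push_cast; ring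

lemma z72one : ζ72 ^ (72:ℤ) = 1 := by
  rw [zeta_zpow, show ((72:ℤ):ℂ) * (2 * Real.pi * Complex.I / 72) = 2 * (Real.pi:ℂ) * Complex.I by push_cast; ring,
    Complex.exp_two_pi_mul_I]

lemma zne : ζ72 ≠ 0 := Complex.exp_ne_zero _

lemma z48 : ζ72 ^ (48:ℤ) = -(1/2) - s3/2 * Complex.I := by
  have := zpow_add₀ zne (-24) 72
  rw [show (-24 + 72 : ℤ) = 48 by norm_num] at this
  rw [this, zm24, z72one, mul_one]

lemma z120 : ζ72 ^ (120:ℤ) = -(1/2) - s3/2 * Complex.I := by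
  have := zpow_add₀ zne 48 72
  rw [show (48 + 72 : ℤ) = 120 by norm_num] at this
  rw [this, z48, z72one, mul_one]

lemma zm120 : ζ72 ^ (-120:ℤ) = -(1/2) + s3/2 * Complex.I := by
  have h := zpow_add₀ zne (-120) 144
  rw [show (-120 + 144 : ℤ) = 24 by norm_num] at h
  have h144 : ζ72 ^ (144:ℤ) = 1 := by
    have := zpow_add₀ zne 72 72
    rw [show (72 + 72 : ℤ) = 144 by norm_num] at this
    rw [this, z72one, mul_one]
  rw [h144, mul_one] at h
  rw [← h, z24]

lemma zm18 : ζ72 ^ (-18:ℤ) = -Complex.I := by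
  rw [zeta_zpow, show ((-18:ℤ):ℂ) * (2 * Real.pi * Complex.I / 72) = ((-(Real.pi/2) : ℝ):ℂ) * Complex.I by push_cast; ring,
    exp_real_mul_I, Real.cos_neg, Real.sin_neg, Real.cos_pi_div_two, Real.sin_pi_div_two]
  push_cast; ring

lemma s3sq : s3 * s3 = 3 := by
  rw [← Complex.ofReal_mul, Real.mul_self_sqrt (by norm_num : (0:ℝ) ≤ 3)]
  norm_num

lemma s3ne : s3 ≠ 0 := by
  simp only [s3, ne_eq, Complex.ofReal_eq_zero]
  positivity


lemma natpow (k : ℕ) : ζ72 ^ k = ζ72 ^ (k:ℤ) := (zpow_natCast _ _).symm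

lemma p12 : ζ72 ^ (12:ℕ) = 1/2 + s3/2 * Complex.I := by
  rw [natpow, show ((12:ℕ):ℤ) = (12:ℤ) by norm_num, z12]
lemma i12 : (ζ72 ^ (12:ℕ))⁻¹ = 1/2 - s3/2 * Complex.I := by
  rw [natpow, ← zpow_neg, show (-((12:ℕ):ℤ)) = (-12:ℤ) by norm_num, zm12]
lemma p24 : ζ72 ^ (24:ℕ) = -(1/2) + s3/2 * Complex.I := by
  rw [natpow, show ((24:ℕ):ℤ) = (24:ℤ) by norm_num, z24]
lemma i24 : (ζ72 ^ (24:ℕ))⁻¹ = -(1/2) - s3/2 * Complex.I := by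
  rw [natpow, ← zpow_neg, show (-((24:ℕ):ℤ)) = (-24:ℤ) by norm_num, zm24]
lemma p48 : ζ72 ^ (48:ℕ) = -(1/2) - s3/2 * Complex.I := by
  rw [natpow, show ((48:ℕ):ℤ) = (48:ℤ) by norm_num, z48]
lemma p120 : ζ72 ^ (120:ℕ) = -(1/2) - s3/2 * Complex.I := by
  rw [natpow, show ((120:ℕ):ℤ) = (120:ℤ) by norm_num, z120]
lemma i120 : (ζ72 ^ (120:ℕ))⁻¹ = -(1/2) + s3/2 * Complex.I := by
  rw [natpow, ← zpow_neg, show (-((120:ℕ):ℤ)) = (-120:ℤ) by norm_num, zm120]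
lemma i18 : (ζ72 ^ (18:ℕ))⁻¹ = -Complex.I := by
  rw [natpow, ← zpow_neg, show (-((18:ℕ):ℤ)) = (-18:ℤ) by norm_num, zm18]

lemma iz12 : (ζ72 ^ (12:ℤ))⁻¹ = 1/2 - s3/2 * Complex.I := by
  rw [← zpow_neg]; exact zm12
lemma iz24 : (ζ72 ^ (24:ℤ))⁻¹ = -(1/2) - s3/2 * Complex.I := by
  rw [← zpow_neg]; exact zm24
lemma iz120 : (ζ72 ^ (120:ℤ))⁻¹ = -(1/2) + s3/2 * Complex.I := by
  rw [← zpow_neg]; exact zm120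
lemma iz18 : (ζ72 ^ (18:ℤ))⁻¹ = -Complex.I := by
  rw [← zpow_neg]; exact zm18

lemma hne12 : ((1:ℂ)/2 + s3/2 * Complex.I) - (1/2 - s3/2 * Complex.I) ≠ 0 := by
  intro h
  apply s3ne
  have : s3 * Complex.I = 0 := by linear_combination h
  rcases mul_eq_zero.mp this with h' | h'
  · exact h'
  · exact absurd h' Complex.I_ne_zero

lemma hne24 : (-((1:ℂ)/2) + s3/2 * Complex.I) - (-(1/2) - s3/2 * Complex.I) ≠ 0 := by
  intro h
  apply s3ne
  have : s3 * Complex.I = 0 := by linear_combination h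
  rcases mul_eq_zero.mp this with h' | h'
  · exact h'
  · exact absurd h' Complex.I_ne_zero

lemma J1 : J72 1 = 1 := by
  rw [J72]
  simp only [Finset.sum_range_succ, Finset.sum_range_zero]
  norm_num
  rw [eps1, eps2, eps3, eps4, eps5, eps6, eps0]
  push_cast
  rw [i12, p12, p24]
  have h := hne12
  field_simp [s3ne, Complex.I_ne_zero]
  ring_nf
  linear_combination (-(s3^2)) * Complex.I_sq + s3sq

lemma J2 : J72 2 = 1 := by
  rw [J72]
  simp only [Finset.sum_range_succ, Finset.sum_range_zero]
  norm_num
  rw [eps1, eps2, eps3, eps4, eps5, eps6, eps7, eps8, eps9, eps10, eps11, eps12, eps0]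
  push_cast
  rw [i120, i24, p24, p48, p120]
  have h := hne24
  field_simp [s3ne, Complex.I_ne_zero]
  ring_nf
  linear_combination (-(s3^2)) * Complex.I_sq + s3sq

lemma q1 : qint72 1 = 1 := by
  rw [qint72]
  norm_num
  rw [i12, p12]
  exact hne12

lemma q2 : qint72 2 = 1 := by
  rw [qint72]
  norm_num
  rw [i12, i24, p12, p24]
  rw [div_eq_one_iff_eq hne12]
  ring

/-- The SU(2) Chern–Simons partition function of `S³_{−1}(T(2,3) # T(2,3))` at level
`k = 3` equals `1/√2`:
`(−i(ζ¹² − ζ⁻¹²)/√6) · (Σ_{n=1}^{2} [n]² ζ^{−6(n²−1)} J_n²)/(Σ_{n=1}^{2} [n]² ζ^{−6(n²−1)}) = 1/√2`. -/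
theorem Z_CS_trefoil_connected_sum_level_three :
    (-Complex.I * (ζ72 ^ (12:ℤ) - ζ72 ^ (-12:ℤ)) / (Real.sqrt 6 : ℂ)) *
      ((∑ n ∈ Finset.Icc 1 2, (qint72 n)^2 * ζ72 ^ (-6*((n:ℤ)^2 - 1)) * (J72 n)^2) /
        (∑ n ∈ Finset.Icc 1 2, (qint72 n)^2 * ζ72 ^ (-6*((n:ℤ)^2 - 1))))
      = 1 / (Real.sqrt 2 : ℂ) := by
  have hIcc : (Finset.Icc 1 2 : Finset ℕ) = {1, 2} := by decide
  rw [hIcc]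
  simp only [Finset.sum_insert (by decide : (1:ℕ) ∉ ({2}:Finset ℕ)), Finset.sum_singleton]
  rw [J1, J2, q1, q2]
  norm_num
  rw [i18, i12, p12]
  have hden : (1 : ℂ) + -Complex.I ≠ 0 := by
    intro h
    have h2 := congrArg Complex.re h
    simp at h2
  have h6 : (Real.sqrt 6 : ℂ) = (Real.sqrt 2 : ℂ) * (Real.sqrt 3 : ℂ) := by
    rw [← Complex.ofReal_mul, show (6:ℝ) = 2*3 by norm_num,
      Real.sqrt_mul (by norm_num : (0:ℝ) ≤ 2)]
  have s2ne : (Real.sqrt 2 : ℂ) ≠ 0 := by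
    simp only [ne_eq, Complex.ofReal_eq_zero]
    positivity
  rw [h6, div_self hden]
  field_simp
  ring_nf
  linear_combination (-(s3*2)) * Complex.I_sq
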